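/- Let {e_n}_{n≥0} be an orthonormal basis of H, k ≥ 1, and α₀,…,α_k ∈ ℂ with Σ_{i=0}^k |α_i|² < 1. Define T by T(e₀) = α₀e₀ + α₁e₁ + ⋯ + α_k e_k and T(e_n) = e_{n+k} for n ≥ 1. Then T is a hyponormal contraction: ‖T‖ ≤ 1 and T*T − TT* ≥ 0. -/

import Mathlib

open ContinuousLinearMap

local notation "⟪" x ", " y "⟫" => @inner ℂ _ _ x y

/-- For `k ≥ 1` and `α₀, …, α_k` with `Σ |α i|² < 1`, the operator defined by
`T e₀ = Σ α i • e i` and `T e_n = e_{n+k}` for `n ≥ 1` is a hyponormal contraction. -/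
theorem rank_one_perturbation_hyponormal
    {H : Type*} [NormedAddCommGroup H] [InnerProductSpace ℂ H] [CompleteSpace H]
    (e : HilbertBasis ℕ ℂ H) (k : ℕ) (hk : 1 ≤ k) (α : ℕ → ℂ)
    (hα : ∑ i ∈ Finset.range (k + 1), ‖α i‖ ^ 2 < 1)
    (T : H →L[ℂ] H)
    (hT0 : T (e 0) = ∑ i ∈ Finset.range (k + 1), α i • e i)
    (hTn : ∀ n : ℕ, 1 ≤ n → T (e n) = e (n + k)) :
    ‖T‖ ≤ 1 ∧ (adjoint T * T - T * adjoint T).IsPositive := by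
  classical
  set A : ℝ := ∑ i ∈ Finset.range (k + 1), ‖α i‖ ^ 2 with hAdef
  have hA1 : A < 1 := by
    simpa [hAdef] using hα
  have hA0 : 0 ≤ A := Finset.sum_nonneg fun i _ => sq_nonneg _
  have horth : ∀ m n : ℕ, ⟪e m, e n⟫ = if m = n then (1 : ℂ) else 0 := fun m n => by
    rw [orthonormal_iff_ite.mp e.orthonormal]
  -- Parseval
  have parseval : ∀ x : H, HasSum (fun n => ‖⟪e n, x⟫‖ ^ 2) (‖x‖ ^ 2) := by
    intro x
    have h := (e.hasSum_inner_mul_inner x x).mapL Complex.reCLM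
    have h1 : (fun n => Complex.reCLM (⟪x, e n⟫ * ⟪e n, x⟫)) =
        fun n => ‖⟪e n, x⟫‖ ^ 2 := by
      funext n
      rw [← inner_conj_symm x (e n), mul_comm, Complex.mul_conj]
      simp [Complex.normSq_eq_norm_sq, ← Complex.ofReal_pow]
    have h2 : Complex.reCLM ⟪x, x⟫ = ‖x‖ ^ 2 := by
      simpa using inner_self_eq_norm_sq (𝕜 := ℂ) x
    rw [h1, h2] at h
    exact h
  -- inner products of basis vectors with T (e n)
  have hTe : ∀ m n : ℕ, ⟪e m, T (e n)⟫ =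
      if n = 0 then (if m ≤ k then α m else 0) else (if m = n + k then 1 else 0) := by
    intro m n
    rcases Nat.eq_zero_or_pos n with rfl | hn
    · simp [hT0, inner_sum, inner_smul_right, horth, mul_ite, mul_one, mul_zero,
        Finset.sum_ite_eq, Finset.mem_range, Nat.lt_succ_iff]
    · rw [hTn n hn, horth]
      simp [hn.ne']
  -- coefficients of T x
  have coeffT : ∀ (x : H) (m : ℕ), ⟪e m, T x⟫ =
      if m ≤ k then α m * ⟪e 0, x⟫ else ⟪e (m - k), x⟫ := by
    intro x m
    have hx := ((e.hasSum_repr x).mapL T).mapL (innerSL ℂ (e m))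
    have hx' : HasSum (fun n => ⟪e n, x⟫ * ⟪e m, T (e n)⟫) ⟪e m, T x⟫ := by
      refine hx.congr_fun fun n => ?_
      simp [e.repr_apply_apply, inner_smul_right]
    by_cases hm : m ≤ k
    · have key : (fun n => ⟪e n, x⟫ * ⟪e m, T (e n)⟫) =
          fun n => if n = 0 then α m * ⟪e 0, x⟫ else 0 := by
        funext n
        rcases Nat.eq_zero_or_pos n with rfl | hn
        · simp [hTe, hm, mul_comm]
        · have : m ≠ n + k := by omega
          simp [hTe, hn.ne', this]
      rw [key] at hx'
      rw [if_pos hm]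
      exact hx'.unique (hasSum_ite_eq 0 _)
    · have key : (fun n => ⟪e n, x⟫ * ⟪e m, T (e n)⟫) =
          fun n => if n = m - k then ⟪e (m - k), x⟫ else 0 := by
        funext n
        rcases Nat.eq_zero_or_pos n with rfl | hn
        · have h0 : (0 : ℕ) ≠ m - k := by omega
          simp [hTe, hm, h0]
        · by_cases hnm : n = m - k
          · subst hnm
            have : m = m - k + k := by omega
            simp [hTe, hn.ne', ← this]
          · have : m ≠ n + k := by omega
            simp [hTe, hn.ne', this, hnm]
      rw [key] at hx'
      rw [if_neg hm]
      exact hx'.unique (hasSum_ite_eq (m - k) _)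
  -- coefficients of (adjoint T) x
  have coeffTs : ∀ (x : H) (m : ℕ), ⟪e m, adjoint T x⟫ =
      if m = 0 then ∑ i ∈ Finset.range (k + 1), (starRingEnd ℂ) (α i) * ⟪e i, x⟫
      else ⟪e (m + k), x⟫ := by
    intro x m
    rw [adjoint_inner_right]
    rcases Nat.eq_zero_or_pos m with rfl | hm
    · simp [hT0, sum_inner, inner_smul_left]
    · rw [hTn m hm, if_neg hm.ne']
  -- norm of T x
  have normTx : ∀ x : H, ‖T x‖ ^ 2 =
      A * ‖⟪e 0, x⟫‖ ^ 2 + (‖x‖ ^ 2 - ‖⟪e 0, x⟫‖ ^ 2) := by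
    intro x
    have P := parseval (T x)
    have hfun : (fun m => ‖⟪e m, T x⟫‖ ^ 2) =
        fun m => if m ≤ k then ‖α m‖ ^ 2 * ‖⟪e 0, x⟫‖ ^ 2 else ‖⟪e (m - k), x⟫‖ ^ 2 := by
      funext m
      rw [coeffT x m]
      by_cases hm : m ≤ k <;> simp [hm, norm_mul, mul_pow]
    rw [hfun] at P
    set g : ℕ → ℝ :=
      fun m => if m ≤ k then ‖α m‖ ^ 2 * ‖⟪e 0, x⟫‖ ^ 2 else ‖⟪e (m - k), x⟫‖ ^ 2 with hg
    have tail0 : HasSum (fun n => ‖⟪e (n + 1), x⟫‖ ^ 2)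
        (‖x‖ ^ 2 - ‖⟪e 0, x⟫‖ ^ 2) := by
      have := (hasSum_nat_add_iff' 1).mpr (parseval x)
      simpa using this
    have tail : HasSum (fun n => g (n + (k + 1))) (‖x‖ ^ 2 - ‖⟪e 0, x⟫‖ ^ 2) := by
      refine tail0.congr_fun fun n => ?_
      have h1 : ¬ n + (k + 1) ≤ k := by omega
      have h2 : n + (k + 1) - k = n + 1 := by omega
      simp [hg, h1, h2]
    have head : ∑ i ∈ Finset.range (k + 1), g i = A * ‖⟪e 0, x⟫‖ ^ 2 := by
      rw [hAdef, Finset.sum_mul]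
      refine Finset.sum_congr rfl fun i hi => ?_
      have : i ≤ k := by simpa [Nat.lt_succ_iff] using Finset.mem_range.mp hi
      simp [hg, this]
    have total : HasSum g (A * ‖⟪e 0, x⟫‖ ^ 2 + (‖x‖ ^ 2 - ‖⟪e 0, x⟫‖ ^ 2)) := by
      refine (hasSum_nat_add_iff' (k + 1)).mp ?_
      rw [head]
      convert tail using 1
      · rfl
      ring
    exact P.unique total
  -- norm of (adjoint T) x
  have normTsx : ∀ x : H, ‖adjoint T x‖ ^ 2 =
      ‖∑ i ∈ Finset.range (k + 1), (starRingEnd ℂ) (α i) * ⟪e i, x⟫‖ ^ 2 +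
        (‖x‖ ^ 2 - ∑ i ∈ Finset.range (k + 1), ‖⟪e i, x⟫‖ ^ 2) := by
    intro x
    have P := parseval (adjoint T x)
    set c : ℂ := ∑ i ∈ Finset.range (k + 1), (starRingEnd ℂ) (α i) * ⟪e i, x⟫ with hc
    have hfun : (fun m => ‖⟪e m, adjoint T x⟫‖ ^ 2) =
        fun m => if m = 0 then ‖c‖ ^ 2 else ‖⟪e (m + k), x⟫‖ ^ 2 := by
      funext m
      rw [coeffTs x m]
      by_cases hm : m = 0 <;> simp [hm, hc]
    rw [hfun] at P
    set g : ℕ → ℝ := fun m => if m = 0 then ‖c‖ ^ 2 else ‖⟪e (m + k), x⟫‖ ^ 2 with hg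
    have tail0 : HasSum (fun n => ‖⟪e (n + (k + 1)), x⟫‖ ^ 2)
        (‖x‖ ^ 2 - ∑ i ∈ Finset.range (k + 1), ‖⟪e i, x⟫‖ ^ 2) :=
      (hasSum_nat_add_iff' (k + 1)).mpr (parseval x)
    have tail : HasSum (fun n => g (n + 1))
        (‖x‖ ^ 2 - ∑ i ∈ Finset.range (k + 1), ‖⟪e i, x⟫‖ ^ 2) := by
      refine tail0.congr_fun fun n => ?_
      have h2 : n + 1 + k = n + (k + 1) := by omega
      simp [hg, h2]
    have total : HasSum g (‖c‖ ^ 2 +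
        (‖x‖ ^ 2 - ∑ i ∈ Finset.range (k + 1), ‖⟪e i, x⟫‖ ^ 2)) := by
      refine (hasSum_nat_add_iff' 1).mp ?_
      have head : ∑ i ∈ Finset.range 1, g i = ‖c‖ ^ 2 := by simp [hg]
      rw [head]
      convert tail using 1
      · rfl
      ring
    exact P.unique total
  -- contraction
  have hcontr : ∀ x : H, ‖T x‖ ≤ ‖x‖ := by
    intro x
    have h := normTx x
    have h0 : 0 ≤ ‖⟪e 0, x⟫‖ ^ 2 := sq_nonneg _
    have hsq : ‖T x‖ ^ 2 ≤ ‖x‖ ^ 2 := by nlinarith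
    exact (pow_le_pow_iff_left₀ (norm_nonneg _) (norm_nonneg _) two_ne_zero).mp hsq
  -- key inequality : ‖adjoint T x‖² ≤ ‖T x‖²
  have hkey : ∀ x : H, ‖adjoint T x‖ ^ 2 ≤ ‖T x‖ ^ 2 := by
    intro x
    rw [normTx x, normTsx x]
    set c : ℂ := ∑ i ∈ Finset.range (k + 1), (starRingEnd ℂ) (α i) * ⟪e i, x⟫ with hc
    set S : ℝ := ∑ i ∈ Finset.range (k + 1), ‖⟪e i, x⟫‖ ^ 2 with hS
    have hcs : ‖c‖ ^ 2 ≤ A * S := by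
      have h1 : ‖c‖ ≤ ∑ i ∈ Finset.range (k + 1), ‖α i‖ * ‖⟪e i, x⟫‖ := by
        refine (norm_sum_le _ _).trans_eq ?_
        refine Finset.sum_congr rfl fun i _ => ?_
        simp [norm_mul]
      have h2 : ‖c‖ ^ 2 ≤ (∑ i ∈ Finset.range (k + 1), ‖α i‖ * ‖⟪e i, x⟫‖) ^ 2 :=
        pow_le_pow_left₀ (norm_nonneg _) h1 2
      have h3 := Finset.sum_mul_sq_le_sq_mul_sq (Finset.range (k + 1))
        (fun i => ‖α i‖) (fun i => ‖⟪e i, x⟫‖)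
      exact h2.trans h3
    have hF0S : ‖⟪e 0, x⟫‖ ^ 2 ≤ S :=
      Finset.single_le_sum (f := fun i => ‖⟪e i, x⟫‖ ^ 2) (fun i _ => sq_nonneg _)
        (Finset.mem_range.mpr (Nat.succ_pos k))
    nlinarith [mul_nonneg (sub_nonneg.mpr hA1.le) (sub_nonneg.mpr hF0S)]
  constructor
  · refine opNorm_le_bound T zero_le_one fun x => ?_
    simpa using hcontr x
  · constructor
    · have : IsSelfAdjoint (star T * T - T * star T) := by
        rw [IsSelfAdjoint]
        simp [star_sub, star_mul, mul_comm]
      simpa [star_eq_adjoint] using this.isSymmetric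
    · intro x
      rw [reApplyInnerSelf_apply]
      have h1 : ⟪(adjoint T * T - T * adjoint T) x, x⟫ =
          ⟪T x, T x⟫ - ⟪adjoint T x, adjoint T x⟫ := by
        simp only [sub_apply, mul_apply_eq_comp, inner_sub_left]
        rw [← adjoint_inner_right T (adjoint T x) x, adjoint_inner_left]
      rw [h1]
      simp only [map_sub, inner_self_eq_norm_sq]
      have := hkey x
      linarith
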